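/- Let D be a finite set of size n partitioned into disjoint nonempty subsets A and B, with λ_A := n/(2|A|) and λ_B := n/(2|B|). For weight functions w : D → ℝ with w ≥ 0 and ∑_{x∈A} w(x) = ∑_{x∈B} w(x) = n/2, define the pairwise objective P(w) := ∑_{{x,y}⊆A, x≠y} max(w(x), w(y)) + ∑_{{x,y}⊆B, x≠y} max(w(x), w(y)) and the aggregated worst-case noise N(w) := ∑_{k=1}^{|A|} (max over S ⊆ A, |S| = k of ∑_{x∈S}(w(x) − λ_A)) + ∑_{k=1}^{|B|} (max over S ⊆ B, |S| = k of ∑_{x∈S}(w(x) − λ_B)). If w and w' both satisfy the constraints and P(w) ≤ P(w'), then N(w) ≤ N(w'). -/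

import Mathlib

/-- Sum over unordered pairs of distinct elements of `A` of the pairwise maximum of weights,
written as half the sum over ordered pairs of distinct elements. -/
noncomputable def pairMaxSum {α : Type*} [DecidableEq α] (A : Finset α) (w : α → ℝ) : ℝ :=
  (∑ p ∈ A.offDiag, max (w p.1) (w p.2)) / 2

/-- Aggregated worst-case deviation sum
`∑_{k=1}^{|A|} (max over S ⊆ A with |S| = k of ∑_{x∈S} (w x − λ))`. -/
noncomputable def noiseSum {α : Type*} (A : Finset α) (lam : ℝ) (w : α → ℝ) : ℝ :=
  ∑ k ∈ (Finset.Icc 1 A.card).attach,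
    (A.powersetCard k.1).sup'
      (Finset.powersetCard_nonempty.mpr (Finset.mem_Icc.mp k.2).2)
      (fun S => ∑ x ∈ S, (w x - lam))

lemma noise_eq {α : Type*} [DecidableEq α] (A : Finset α) (lam : ℝ) (w : α → ℝ) :
    noiseSum A lam w = pairMaxSum A w + (∑ x ∈ A, w x)
      - lam * ((A.card * (A.card + 1) : ℕ) : ℝ) / 2 := by
  classical
  set r : α → α → Prop := fun x y => w y ≤ w x with hr
  letI : DecidableRel r := fun a b => Real.decidableLE _ _
  haveI : IsTotal α r := ⟨fun a b => le_total (w b) (w a)⟩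
  haveI : IsTrans α r := ⟨fun a b c h1 h2 => le_trans h2 h1⟩
  set l : List α := List.insertionSort r A.toList with hl
  have hperm : l.Perm A.toList := List.perm_insertionSort r _
  have hnd : l.Nodup := hperm.nodup_iff.mpr A.nodup_toList
  have hlen : l.length = A.card := by rw [hperm.length_eq, Finset.length_toList]
  have hmem : ∀ x, x ∈ l ↔ x ∈ A := fun x => by rw [hperm.mem_iff, Finset.mem_toList]
  have hsorted : l.Pairwise r := List.pairwise_insertionSort r _
  have hmono : ∀ i j : Fin l.length, i < j → w (l.get j) ≤ w (l.get i) :=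
    fun i j hij => hsorted.rel_get_of_lt hij
  have hginj : Function.Injective l.get := List.nodup_iff_injective_get.mp hnd
  -- sum over A as indexed sum
  have hAsum : ∀ f : α → ℝ, ∑ x ∈ A, f x = ∑ i : Fin l.length, f (l.get i) := by
    intro f
    refine (Finset.sum_bij (fun i _ => l.get i) ?_ ?_ ?_ ?_).symm
    · intro i _; exact (hmem _).mp (List.get_mem l i)
    · intro i _ j _ h; exact hginj h
    · intro x hx
      obtain ⟨i, hi⟩ := List.mem_iff_get.mp ((hmem x).mpr hx)
      exact ⟨i, Finset.mem_univ i, hi⟩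
    · intro i _; rfl
  -- top-k sets
  have hsup : ∀ k, 1 ≤ k → k ≤ A.card → ∀ (hne : (A.powersetCard k).Nonempty),
      (A.powersetCard k).sup' hne (fun S => ∑ x ∈ S, (w x - lam))
      = ∑ i ∈ Finset.univ.filter (fun i : Fin l.length => i.1 < k),
          (w (l.get i) - lam) := by
    intro k hk1 hk2 hne
    set Tk : Finset α := (l.take k).toFinset with hTk
    have ndtake : (l.take k).Nodup := hnd.sublist (List.take_sublist _ _)
    have hTksub : Tk ⊆ A := fun x hx =>
      (hmem x).mp (List.take_subset _ _ (List.mem_toFinset.mp hx))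
    have hTkcard : Tk.card = k := by
      rw [hTk, List.toFinset_card_of_nodup ndtake, List.length_take]
      exact min_eq_left (hlen ▸ hk2)
    have hTkmem : ∀ x, x ∈ Tk ↔ ∃ i : Fin l.length, i.1 < k ∧ l.get i = x := by
      intro x
      constructor
      · intro hx
        obtain ⟨j, hj⟩ := List.mem_iff_get.mp (List.mem_toFinset.mp hx)
        have hjk : j.1 < k := lt_of_lt_of_le j.2 (by rw [List.length_take]; exact min_le_left _ _)
        have hjl : j.1 < l.length := lt_of_lt_of_le hjk (hlen ▸ hk2)
        refine ⟨⟨j.1, hjl⟩, hjk, ?_⟩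
        rw [← hj]
        exact List.getElem_take' hjl hjk
      · rintro ⟨i, hik, rfl⟩
        apply List.mem_toFinset.mpr
        rw [List.get_eq_getElem, List.getElem_take' i.2 hik]
        exact List.getElem_mem _
    -- domination
    have hdom : ∀ x ∈ Tk, ∀ y ∈ A, y ∉ Tk → w y ≤ w x := by
      intro x hx y hyA hyT
      obtain ⟨i, hik, rfl⟩ := (hTkmem x).mp hx
      obtain ⟨j, rfl⟩ := List.mem_iff_get.mp ((hmem y).mpr hyA)
      have hjk : ¬ j.1 < k := fun h => hyT ((hTkmem _).mpr ⟨j, h, rfl⟩)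
      exact hmono i j (by omega)
    -- upper bound
    have hub : ∀ S ∈ A.powersetCard k, ∑ x ∈ S, (w x - lam) ≤ ∑ x ∈ Tk, (w x - lam) := by
      intro S hS
      obtain ⟨hSsub, hScard⟩ := Finset.mem_powersetCard.mp hS
      have hcard : (S \ Tk).card = (Tk \ S).card := by
        have h1 := Finset.card_sdiff_add_card_inter S Tk
        have h2 := Finset.card_sdiff_add_card_inter Tk S
        rw [Finset.inter_comm] at h2
        omega
      have hkey : ∑ x ∈ S \ Tk, (w x - lam) ≤ ∑ x ∈ Tk \ S, (w x - lam) := by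
        rcases (S \ Tk).eq_empty_or_nonempty with he | hne'
        · have : (Tk \ S) = ∅ := Finset.card_eq_zero.mp (by rw [← hcard, he]; simp)
          rw [he, this]
        · have hne2 : (Tk \ S).Nonempty :=
            Finset.card_pos.mp (hcard ▸ Finset.card_pos.mpr hne')
          set M := (Tk \ S).inf' hne2 w with hM
          calc ∑ x ∈ S \ Tk, (w x - lam) ≤ (S \ Tk).card • (M - lam) := by
                refine Finset.sum_le_card_nsmul _ _ _ (fun y hy => ?_)
                have hyS := Finset.mem_sdiff.mp hy
                have : w y ≤ M := Finset.le_inf' hne2 _ (fun x hx =>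
                  hdom x (Finset.mem_sdiff.mp hx).1 y (hSsub hyS.1) hyS.2)
                linarith
            _ = (Tk \ S).card • (M - lam) := by rw [hcard]
            _ ≤ ∑ x ∈ Tk \ S, (w x - lam) := by
                refine Finset.card_nsmul_le_sum _ _ _ (fun x hx => ?_)
                have : M ≤ w x := Finset.inf'_le _ hx
                linarith
      calc ∑ x ∈ S, (w x - lam)
          = ∑ x ∈ S ∩ Tk, (w x - lam) + ∑ x ∈ S \ Tk, (w x - lam) :=
            (Finset.sum_inter_add_sum_sdiff _ _ _).symm
        _ ≤ ∑ x ∈ Tk ∩ S, (w x - lam) + ∑ x ∈ Tk \ S, (w x - lam) := by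
            rw [Finset.inter_comm]; linarith
        _ = ∑ x ∈ Tk, (w x - lam) := Finset.sum_inter_add_sum_sdiff _ _ _
    have hTsum : ∑ x ∈ Tk, (w x - lam)
        = ∑ i ∈ Finset.univ.filter (fun i : Fin l.length => i.1 < k), (w (l.get i) - lam) := by
      refine (Finset.sum_bij (fun i _ => l.get i) ?_ ?_ ?_ ?_).symm
      · intro i hi
        exact (hTkmem _).mpr ⟨i, (Finset.mem_filter.mp hi).2, rfl⟩
      · intro i _ j _ h; exact hginj h
      · intro x hx
        obtain ⟨i, hik, rfl⟩ := (hTkmem x).mp hx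
        exact ⟨i, Finset.mem_filter.mpr ⟨Finset.mem_univ _, hik⟩, rfl⟩
      · intro i _; rfl
    refine le_antisymm (Finset.sup'_le _ _ (fun S hS => hTsum ▸ hub S hS)) ?_
    have hTmem : Tk ∈ A.powersetCard k := Finset.mem_powersetCard.mpr ⟨hTksub, hTkcard⟩
    calc ∑ i ∈ Finset.univ.filter (fun i : Fin l.length => i.1 < k), (w (l.get i) - lam)
      = ∑ x ∈ Tk, (w x - lam) := hTsum.symm
    _ ≤ _ := Finset.le_sup' (fun S => ∑ x ∈ S, (w x - lam)) hTmem
  have hN : noiseSum A lam w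
      = ∑ i : Fin l.length, ((A.card - i.1 : ℕ) : ℝ) * (w (l.get i) - lam) := by
    unfold noiseSum
    rw [Finset.sum_congr rfl (fun k hk => hsup k.1 (Finset.mem_Icc.mp k.2).1
      (Finset.mem_Icc.mp k.2).2 _)]
    rw [Finset.sum_attach (Finset.Icc 1 A.card)
      (fun k => ∑ i ∈ Finset.univ.filter (fun i : Fin l.length => i.1 < k), (w (l.get i) - lam))]
    simp_rw [Finset.sum_filter]
    rw [Finset.sum_comm]
    refine Finset.sum_congr rfl (fun i _ => ?_)
    rw [← Finset.sum_filter]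
    have hfe : Finset.filter (fun k => i.1 < k) (Finset.Icc 1 A.card)
        = Finset.Icc (i.1 + 1) A.card := by
      ext k; simp only [Finset.mem_filter, Finset.mem_Icc]; omega
    rw [hfe, Finset.sum_const, Nat.card_Icc, nsmul_eq_mul]
    congr 2
    omega
  have hPs : pairMaxSum A w
      = ∑ i : Fin l.length, ((A.card - 1 - i.1 : ℕ) : ℝ) * w (l.get i) := by
    have hoff : ∑ p ∈ A.offDiag, max (w p.1) (w p.2)
        = ∑ q ∈ Finset.univ.filter (fun q : Fin l.length × Fin l.length => q.1 ≠ q.2),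
            max (w (l.get q.1)) (w (l.get q.2)) := by
      refine (Finset.sum_bij (fun q _ => (l.get q.1, l.get q.2)) ?_ ?_ ?_ ?_).symm
      · intro q hq
        have hne := (Finset.mem_filter.mp hq).2
        exact Finset.mem_offDiag.mpr ⟨(hmem _).mp (List.get_mem l q.1),
          (hmem _).mp (List.get_mem l q.2), fun h => hne (hginj h)⟩
      · intro a _ b _ h
        have h1 := congrArg Prod.fst h
        have h2 := congrArg Prod.snd h
        exact Prod.ext (hginj h1) (hginj h2)
      · intro p hp
        obtain ⟨hp1, hp2, hp3⟩ := Finset.mem_offDiag.mp hp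
        obtain ⟨i, hi⟩ := List.mem_iff_get.mp ((hmem _).mpr hp1)
        obtain ⟨j, hj⟩ := List.mem_iff_get.mp ((hmem _).mpr hp2)
        refine ⟨(i, j), Finset.mem_filter.mpr ⟨Finset.mem_univ _, fun h => hp3 ?_⟩, ?_⟩
        · rw [← hi, ← hj]; exact congrArg l.get h
        · exact Prod.ext hi hj
      · intro q _; rfl
    have hsplitset : Finset.univ.filter (fun q : Fin l.length × Fin l.length => q.1 ≠ q.2)
        = Finset.univ.filter (fun q => q.1 < q.2) ∪ Finset.univ.filter (fun q => q.2 < q.1) := by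
      ext q
      simp only [Finset.mem_filter, Finset.mem_union, Finset.mem_univ, true_and]
      constructor
      · intro h; exact lt_or_gt_of_ne h
      · rintro (h | h)
        · exact ne_of_lt h
        · exact (ne_of_lt h).symm
    have hdisj : Disjoint
        (Finset.univ.filter (fun q : Fin l.length × Fin l.length => q.1 < q.2))
        (Finset.univ.filter (fun q => q.2 < q.1)) := by
      rw [Finset.disjoint_left]
      intro q h1 h2
      exact absurd ((Finset.mem_filter.mp h2).2) (not_lt.mpr (le_of_lt (Finset.mem_filter.mp h1).2))
    have hswap : ∑ q ∈ Finset.univ.filter (fun q : Fin l.length × Fin l.length => q.2 < q.1),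
          max (w (l.get q.1)) (w (l.get q.2))
        = ∑ q ∈ Finset.univ.filter (fun q : Fin l.length × Fin l.length => q.1 < q.2),
            max (w (l.get q.1)) (w (l.get q.2)) := by
      refine Finset.sum_nbij' (fun q => (q.2, q.1)) (fun q => (q.2, q.1)) ?_ ?_ ?_ ?_ ?_
      · intro q hq
        exact Finset.mem_filter.mpr ⟨Finset.mem_univ _, (Finset.mem_filter.mp hq).2⟩
      · intro q hq
        exact Finset.mem_filter.mpr ⟨Finset.mem_univ _, (Finset.mem_filter.mp hq).2⟩
      · intro q _; rfl
      · intro q _; rfl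
      · intro q _; exact (max_comm _ _)
    have hfirst : ∑ q ∈ Finset.univ.filter (fun q : Fin l.length × Fin l.length => q.1 < q.2),
          max (w (l.get q.1)) (w (l.get q.2))
        = ∑ q ∈ Finset.univ.filter (fun q : Fin l.length × Fin l.length => q.1 < q.2),
            w (l.get q.1) := by
      refine Finset.sum_congr rfl (fun q hq => ?_)
      exact max_eq_left (hmono q.1 q.2 (Finset.mem_filter.mp hq).2)
    have hcount : ∑ q ∈ Finset.univ.filter (fun q : Fin l.length × Fin l.length => q.1 < q.2),
          w (l.get q.1)
        = ∑ i : Fin l.length, ((A.card - 1 - i.1 : ℕ) : ℝ) * w (l.get i) := by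
      rw [Finset.sum_filter, ← Finset.univ_product_univ, Finset.sum_product]
      refine Finset.sum_congr rfl (fun i _ => ?_)
      rw [← Finset.sum_filter]
      have hIoi : Finset.univ.filter (fun j : Fin l.length => i < j) = Finset.Ioi i := by
        ext j; simp
      rw [hIoi]
      rw [show (∑ a ∈ Finset.Ioi i, w (l.get (i, a).1)) = ∑ _a ∈ Finset.Ioi i, w (l.get i)
        from rfl, Finset.sum_const, Fin.card_Ioi, nsmul_eq_mul]
      congr 2
      omega
    rw [pairMaxSum, hoff, hsplitset, Finset.sum_union hdisj, hswap, hfirst, hcount]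
    ring
  have hGaussN : (∑ i ∈ Finset.range A.card, (A.card - i)) * 2 = A.card * (A.card + 1) := by
    have h1 : ∑ i ∈ Finset.range A.card, (A.card - i)
        = ∑ i ∈ Finset.range A.card, (i + 1) := by
      rw [← Finset.sum_range_reflect]
      exact Finset.sum_congr rfl (fun i hi => by
        have := Finset.mem_range.mp hi; omega)
    rw [h1, Finset.sum_add_distrib, Finset.sum_const, Finset.card_range, smul_eq_mul, mul_one]
    cases A.card with
    | zero => simp
    | succ m =>
      have h2 := Finset.sum_range_id_mul_two (m + 1)
      rw [Nat.add_sub_cancel] at h2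
      nlinarith [h2]
  have hGauss : ∑ i : Fin l.length, ((A.card - i.1 : ℕ) : ℝ)
      = ((A.card * (A.card + 1) : ℕ) : ℝ) / 2 := by
    rw [Fin.sum_univ_eq_sum_range (fun i => ((A.card - i : ℕ) : ℝ)), hlen, ← Nat.cast_sum]
    rw [← hGaussN]
    push_cast
    ring
  rw [hN, hPs, hAsum w]
  have hterm : ∀ i : Fin l.length, ((A.card - i.1 : ℕ) : ℝ) * (w (l.get i) - lam)
      = (((A.card - 1 - i.1 : ℕ) : ℝ) * w (l.get i) + w (l.get i))
        - ((A.card - i.1 : ℕ) : ℝ) * lam := by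
    intro i
    have hi : i.1 < A.card := hlen ▸ i.2
    have h1 : A.card - i.1 = (A.card - 1 - i.1) + 1 := by omega
    rw [h1]
    push_cast
    ring
  rw [Finset.sum_congr rfl (fun i _ => hterm i), Finset.sum_sub_distrib,
    Finset.sum_add_distrib, ← Finset.sum_mul, hGauss]
  ring

/-- Let `D` of size `n` be partitioned into disjoint nonempty subsets `A`
and `B`, with `λ_A = n/(2|A|)` and `λ_B = n/(2|B|)`. For feasible weights (nonnegative, each
group summing to `n/2`), define the pairwise objective
`P w = pairMaxSum A w + pairMaxSum B w` and the aggregated worst-case noise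
`N w = noiseSum A λ_A w + noiseSum B λ_B w`. If `w` and `w'` are both feasible and
`P w ≤ P w'`, then `N w ≤ N w'`. -/
theorem pair_objective_monotone_noise {α : Type*} [DecidableEq α]
    (D A B : Finset α) (hU : A ∪ B = D) (hI : A ∩ B = ∅)
    (hA : A.Nonempty) (hB : B.Nonempty)
    (n : ℕ) (hn : D.card = n)
    (lamA lamB : ℝ)
    (hlamA : lamA = (n : ℝ) / (2 * (A.card : ℝ)))
    (hlamB : lamB = (n : ℝ) / (2 * (B.card : ℝ)))
    (w w' : α → ℝ)
    (hw0 : ∀ x ∈ D, 0 ≤ w x)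
    (hwA : ∑ x ∈ A, w x = (n : ℝ) / 2) (hwB : ∑ x ∈ B, w x = (n : ℝ) / 2)
    (hw0' : ∀ x ∈ D, 0 ≤ w' x)
    (hwA' : ∑ x ∈ A, w' x = (n : ℝ) / 2) (hwB' : ∑ x ∈ B, w' x = (n : ℝ) / 2)
    (hP : pairMaxSum A w + pairMaxSum B w ≤ pairMaxSum A w' + pairMaxSum B w') :
    noiseSum A lamA w + noiseSum B lamB w ≤ noiseSum A lamA w' + noiseSum B lamB w' := by
  have kA := noise_eq A lamA w
  have kA' := noise_eq A lamA w'
  have kB := noise_eq B lamB w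
  have kB' := noise_eq B lamB w'
  rw [hwA] at kA
  rw [hwA'] at kA'
  rw [hwB] at kB
  rw [hwB'] at kB'
  linarith
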